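/- Let K ≥ 1 and 1/2 < p₂ ≤ p₁ be real numbers with p₁ < 2p₂ − 3/2, and let V̄ : (0,∞) → ℝ be a measurable locally bounded function such that y^(2p₂) ≤ exp(2·V̄(y)) ≤ y^(2p₁) for all y ≥ K. Suppose v¹ : [K,∞) → [0,∞) is measurable and satisfies v¹(y) ≤ C₁·y^(2(p₁−p₂)+2) for all y ≥ K with some constant C₁ > 0. Then for every ξ ≥ K, v²(ξ) := 4·∫_K^ξ exp(2·V̄(y₁)) · ( ∫_{y₁}^∞ v¹(y₂)·exp(−2·V̄(y₂)) dy₂ ) dy₁ is finite and there exists a constant C₂ (depending only on p₁, p₂, C₁) such that v²(ξ) ≤ C₂·ξ^(4(p₁−p₂+1)). -/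

import Mathlib

open MeasureTheory

/-- Under `y^(2p₂) ≤ exp(2·V̄(y)) ≤ y^(2p₁)` for `y ≥ K` (with
`K ≥ 1`, `1/2 < p₂ ≤ p₁`, `p₁ < 2p₂ − 3/2`), if `v¹ ≥ 0` is measurable with
`v¹(y) ≤ C₁·y^(2(p₁−p₂)+2)` for `y ≥ K`, then for every `ξ ≥ K`
`v²(ξ) = 4·∫_K^ξ e^{2V̄(y₁)} (∫_{y₁}^∞ v¹(y₂) e^{−2V̄(y₂)} dy₂) dy₁`
is finite (all integrals involved converge), and there is a constant `C₂`
(depending only on `p₁, p₂, C₁`) with `v²(ξ) ≤ C₂·ξ^(4(p₁−p₂+1))`. -/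
theorem second_moment_bound
    (K p₁ p₂ : ℝ) (hK : 1 ≤ K) (hp₂ : 1 / 2 < p₂) (hp : p₂ ≤ p₁)
    (hp' : p₁ < 2 * p₂ - 3 / 2)
    (Vbar : ℝ → ℝ) (hmeas : Measurable Vbar)
    (hloc : ∀ a b : ℝ, 0 < a → ∃ M : ℝ, ∀ y ∈ Set.Icc a b, |Vbar y| ≤ M)
    (hlb : ∀ y : ℝ, K ≤ y → y ^ (2 * p₂) ≤ Real.exp (2 * Vbar y))
    (hub : ∀ y : ℝ, K ≤ y → Real.exp (2 * Vbar y) ≤ y ^ (2 * p₁))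
    (v₁ : ℝ → ℝ) (hv₁meas : Measurable v₁)
    (hv₁nonneg : ∀ y : ℝ, K ≤ y → 0 ≤ v₁ y)
    (C₁ : ℝ) (hC₁ : 0 < C₁)
    (hv₁ : ∀ y : ℝ, K ≤ y → v₁ y ≤ C₁ * y ^ (2 * (p₁ - p₂) + 2)) :
    (∀ ξ : ℝ, K ≤ ξ →
      (∀ y₁ : ℝ, K ≤ y₁ →
          IntegrableOn (fun y₂ => v₁ y₂ * Real.exp (-(2 * Vbar y₂)))
            (Set.Ioi y₁)) ∧
        IntervalIntegrable
          (fun y₁ => Real.exp (2 * Vbar y₁) *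
            ∫ y₂ in Set.Ioi y₁, v₁ y₂ * Real.exp (-(2 * Vbar y₂)))
          volume K ξ) ∧
      ∃ C₂ : ℝ, ∀ ξ : ℝ, K ≤ ξ →
        4 * ∫ y₁ in K..ξ, Real.exp (2 * Vbar y₁) *
            ∫ y₂ in Set.Ioi y₁, v₁ y₂ * Real.exp (-(2 * Vbar y₂)) ≤
          C₂ * ξ ^ (4 * (p₁ - p₂ + 1)) := by
  have hK0 : (0:ℝ) < K := lt_of_lt_of_le one_pos hK
  obtain ⟨α, hα_def⟩ : ∃ α : ℝ, α = 2*p₁ - 4*p₂ + 2 := ⟨_, rfl⟩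
  have hα : α < -1 := by rw [hα_def]; linarith
  have hα1 : α + 1 < 0 := by linarith
  set f : ℝ → ℝ := fun y₂ => v₁ y₂ * Real.exp (-(2 * Vbar y₂)) with hf_def
  have hf_meas : Measurable f := hv₁meas.mul ((hmeas.const_mul 2).neg.exp)
  have hfb : ∀ y₂ : ℝ, K ≤ y₂ → f y₂ ≤ C₁ * y₂ ^ α := by
    intro y₂ hy₂
    have hy₂0 : 0 < y₂ := lt_of_lt_of_le hK0 hy₂
    have he : Real.exp (-(2 * Vbar y₂)) ≤ y₂ ^ (-(2*p₂)) := by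
      rw [Real.exp_neg, Real.rpow_neg hy₂0.le]
      exact inv_anti₀ (Real.rpow_pos_of_pos hy₂0 _) (hlb y₂ hy₂)
    have h1 : f y₂ ≤ (C₁ * y₂ ^ (2*(p₁-p₂)+2)) * y₂ ^ (-(2*p₂)) :=
      mul_le_mul (hv₁ y₂ hy₂) he (Real.exp_nonneg _) (by positivity)
    have h2 : (C₁ * y₂ ^ (2*(p₁-p₂)+2)) * y₂ ^ (-(2*p₂)) = C₁ * y₂ ^ α := by
      rw [mul_assoc, ← Real.rpow_add hy₂0,
        show 2*(p₁-p₂)+2 + -(2*p₂) = α by rw [hα_def]; ring]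
    exact h1.trans_eq h2
  have hf_nonneg : ∀ y₂ : ℝ, K ≤ y₂ → 0 ≤ f y₂ :=
    fun y₂ hy₂ => mul_nonneg (hv₁nonneg y₂ hy₂) (Real.exp_nonneg _)
  have hg_int : ∀ y₁ : ℝ, 0 < y₁ → IntegrableOn (fun y₂ => C₁ * y₂ ^ α) (Set.Ioi y₁) :=
    fun y₁ hy₁ => (integrableOn_Ioi_rpow_of_lt hα hy₁).const_mul C₁
  have hf_int : ∀ y₁ : ℝ, K ≤ y₁ → IntegrableOn f (Set.Ioi y₁) := by
    intro y₁ hy₁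
    refine Integrable.mono' (hg_int y₁ (hK0.trans_le hy₁))
      hf_meas.aestronglyMeasurable.restrict ?_
    filter_upwards [ae_restrict_mem measurableSet_Ioi] with y₂ hy₂
    have hKy₂ : K ≤ y₂ := hy₁.trans (le_of_lt hy₂)
    rw [Real.norm_eq_abs, abs_of_nonneg (hf_nonneg y₂ hKy₂)]
    exact hfb y₂ hKy₂
  obtain ⟨C', hC'_def⟩ : ∃ c : ℝ, c = C₁ / (-(α+1)) := ⟨_, rfl⟩
  have hC' : 0 < C' := hC'_def ▸ div_pos hC₁ (by linarith)
  have hT_nonneg : ∀ y₁ : ℝ, K ≤ y₁ → 0 ≤ ∫ y₂ in Set.Ioi y₁, f y₂ := by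
    intro y₁ hy₁
    exact setIntegral_nonneg measurableSet_Ioi
      fun y₂ hy₂ => hf_nonneg y₂ (hy₁.trans (le_of_lt hy₂))
  have hT_bound : ∀ y₁ : ℝ, K ≤ y₁ → (∫ y₂ in Set.Ioi y₁, f y₂) ≤ C' * y₁ ^ (α+1) := by
    intro y₁ hy₁
    have hy₁0 : 0 < y₁ := hK0.trans_le hy₁
    have s1 : (∫ y₂ in Set.Ioi y₁, f y₂) ≤ ∫ y₂ in Set.Ioi y₁, C₁ * y₂ ^ α :=
      setIntegral_mono_on (hf_int y₁ hy₁) (hg_int y₁ hy₁0) measurableSet_Ioi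
        (fun y₂ hy₂ => hfb y₂ (hy₁.trans (le_of_lt hy₂)))
    have s2 : (∫ y₂ in Set.Ioi y₁, C₁ * y₂ ^ α) = C₁ * (-y₁ ^ (α+1) / (α+1)) := by
      rw [integral_const_mul, integral_Ioi_rpow_of_lt hα hy₁0]
    have s3 : C₁ * (-y₁ ^ (α+1) / (α+1)) = C' * y₁ ^ (α+1) := by
      have hd : -y₁ ^ (α+1) / (α+1) = y₁ ^ (α+1) / (-(α+1)) := by
        rw [div_neg, neg_div]
      rw [hC'_def, hd, div_mul_eq_mul_div, mul_div_assoc]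
    exact s1.trans_eq (s2.trans s3)
  have hT_anti : ∀ ξ : ℝ, AntitoneOn (fun y₁ => ∫ y₂ in Set.Ioi y₁, f y₂) (Set.Icc K ξ) := by
    intro ξ a ha b hb hab
    have hsplit : Set.Ioc a b ∪ Set.Ioi b = Set.Ioi a := Set.Ioc_union_Ioi_eq_Ioi hab
    have h1 : IntegrableOn f (Set.Ioc a b) := (hf_int a ha.1).mono_set Set.Ioc_subset_Ioi_self
    have h2 : IntegrableOn f (Set.Ioi b) := hf_int b (ha.1.trans hab)
    have hsum := setIntegral_union (Set.Ioc_disjoint_Ioi le_rfl) measurableSet_Ioi h1 h2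
    rw [hsplit] at hsum
    have hnn : 0 ≤ ∫ y₂ in Set.Ioc a b, f y₂ :=
      setIntegral_nonneg measurableSet_Ioc fun y hy => hf_nonneg y (ha.1.trans hy.1.le)
    simp only
    rw [hsum]
    linarith
  have hp₁0 : 0 ≤ 2 * p₁ := by linarith
  have hH_int : ∀ ξ : ℝ, K ≤ ξ → IntervalIntegrable
      (fun y₁ => Real.exp (2 * Vbar y₁) * ∫ y₂ in Set.Ioi y₁, f y₂) volume K ξ := by
    intro ξ hξ
    rw [intervalIntegrable_iff_integrableOn_Ioc_of_le hξ]
    have hTm : AEMeasurable (fun y₁ => ∫ y₂ in Set.Ioi y₁, f y₂)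
        (volume.restrict (Set.Ioc K ξ)) :=
      (aemeasurable_restrict_of_antitoneOn measurableSet_Icc (hT_anti ξ)).mono_measure
        (Measure.restrict_mono Set.Ioc_subset_Icc_self le_rfl)
    have hHm : AEStronglyMeasurable
        (fun y₁ => Real.exp (2 * Vbar y₁) * ∫ y₂ in Set.Ioi y₁, f y₂)
        (volume.restrict (Set.Ioc K ξ)) :=
      (((hmeas.const_mul 2).exp.aemeasurable.restrict).mul hTm).aestronglyMeasurable
    have hconst : IntegrableOn (fun _ : ℝ => ξ ^ (2*p₁) * (C' * K ^ (α+1)))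
        (Set.Ioc K ξ) volume := (integrableOn_const_iff).mpr (Or.inr measure_Ioc_lt_top)
    refine hconst.mono' hHm ?_
    filter_upwards [ae_restrict_mem measurableSet_Ioc] with y₁ hy₁
    have hKy : K ≤ y₁ := hy₁.1.le
    have hy₁0 : 0 < y₁ := hK0.trans_le hKy
    have hTn := hT_nonneg y₁ hKy
    rw [Real.norm_eq_abs, abs_of_nonneg (mul_nonneg (Real.exp_nonneg _) hTn)]
    exact mul_le_mul
      ((hub y₁ hKy).trans (Real.rpow_le_rpow hy₁0.le hy₁.2 hp₁0))
      ((hT_bound y₁ hKy).trans (mul_le_mul_of_nonneg_left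
        (Real.rpow_le_rpow_of_nonpos hK0 hKy hα1.le) hC'.le))
      hTn (Real.rpow_nonneg (hK0.trans_le hξ).le _)
  refine ⟨fun ξ hξ => ⟨fun y₁ hy₁ => hf_int y₁ hy₁, hH_int ξ hξ⟩, ?_⟩
  obtain ⟨β, hβ_def⟩ : ∃ b : ℝ, b = 2*p₁ + (α+1) := ⟨_, rfl⟩
  have hβ : (-1:ℝ) < β := by rw [hβ_def, hα_def]; linarith
  have hβ1 : (0:ℝ) < β + 1 := by linarith
  refine ⟨4 * C' / (β+1), fun ξ hξ => ?_⟩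
  have hξ0 : 0 < ξ := hK0.trans_le hξ
  have hGcont : ContinuousOn (fun y : ℝ => C' * y ^ β) (Set.uIcc K ξ) := by
    refine continuousOn_const.mul fun y hy => ?_
    have hy0 : y ≠ 0 := by
      rw [Set.uIcc_of_le hξ] at hy
      exact ne_of_gt (hK0.trans_le hy.1)
    exact (Real.continuousAt_rpow_const y β (Or.inl hy0)).continuousWithinAt
  have hG_int : IntervalIntegrable (fun y : ℝ => C' * y ^ β) volume K ξ :=
    hGcont.intervalIntegrable
  have hmono : (∫ y₁ in K..ξ, Real.exp (2 * Vbar y₁) * ∫ y₂ in Set.Ioi y₁, f y₂)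
      ≤ ∫ y₁ in K..ξ, C' * y₁ ^ β := by
    refine intervalIntegral.integral_mono_on hξ (hH_int ξ hξ) hG_int fun y₁ hy₁ => ?_
    have hKy : K ≤ y₁ := hy₁.1
    have hy₁0 : 0 < y₁ := hK0.trans_le hKy
    have hA : Real.exp (2 * Vbar y₁) * (∫ y₂ in Set.Ioi y₁, f y₂)
        ≤ y₁ ^ (2*p₁) * (C' * y₁ ^ (α+1)) :=
      mul_le_mul (hub y₁ hKy) (hT_bound y₁ hKy) (hT_nonneg y₁ hKy)
        (Real.rpow_nonneg hy₁0.le _)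
    have hB : y₁ ^ (2*p₁) * (C' * y₁ ^ (α+1)) = C' * y₁ ^ β := by
      rw [hβ_def, Real.rpow_add hy₁0 (2*p₁) (α+1)]; ring
    exact hA.trans_eq hB
  have hval : (∫ y₁ in K..ξ, C' * y₁ ^ β) = C' * ((ξ^(β+1) - K^(β+1))/(β+1)) := by
    rw [intervalIntegral.integral_const_mul, integral_rpow (Or.inl hβ)]
  have hKpow : 0 ≤ K ^ (β+1) := Real.rpow_nonneg hK0.le _
  have h3 : C' * ((ξ^(β+1) - K^(β+1))/(β+1)) ≤ C' * (ξ^(β+1)/(β+1)) :=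
    mul_le_mul_of_nonneg_left
      ((div_le_div_iff_of_pos_right hβ1).mpr (by linarith)) hC'.le
  have h4 : 4 * (C' * (ξ^(β+1)/(β+1))) = 4 * C' / (β+1) * ξ^(β+1) := by ring
  have hexp : β + 1 = 4 * (p₁ - p₂ + 1) := by rw [hβ_def, hα_def]; ring
  rw [← hexp]
  rw [hval] at hmono
  linarith
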